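/- Let q : ℝ → ℂ be continuous with ∫_ℝ (1+|x|)|q(x)| dx < ∞, and let k be a nonzero real number. Then there exists a unique bounded continuous function f : ℝ → ℂ satisfying the Volterra integral equation f(x) = e^{−ikx} + ∫_{−∞}^x (sin(k(x−t))/k) · q(t) · f(t) dt for all x ∈ ℝ (the left Jost solution f₋(k,·)). -/

import Mathlib

open MeasureTheory Set Filter Topology

namespace JostAux

open BoundedContinuousFunction

noncomputable def g0 (q : ℝ → ℂ) (k : ℝ) : ℝ → ℝ := fun t => ‖q t‖ / |k|

noncomputable def Qf (q : ℝ → ℂ) (k : ℝ) : ℝ → ℝ := fun x => ∫ t in Set.Iic x, g0 q k t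

variable {q : ℝ → ℂ} {k : ℝ}

lemma g0_cont (hq : Continuous q) : Continuous (g0 q k) := hq.norm.div_const _

lemma g0_nonneg (t : ℝ) : 0 ≤ g0 q k t := div_nonneg (norm_nonneg _) (abs_nonneg _)

lemma g0_int (hqi : Integrable fun t => ‖q t‖) : Integrable (g0 q k) := hqi.div_const _

lemma Qf_eq (hqi : Integrable fun t => ‖q t‖) (x : ℝ) :
    Qf q k x = Qf q k 0 + ∫ t in (0:ℝ)..x, g0 q k t := by
  have h := intervalIntegral.integral_Iic_sub_Iic ((g0_int (k := k) hqi).integrableOn (s := Set.Iic 0))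
    ((g0_int (k := k) hqi).integrableOn (s := Set.Iic x))
  simp only [Qf] at *
  linarith

lemma Qf_cont (hqi : Integrable fun t => ‖q t‖) : Continuous (Qf q k) :=
  (continuous_const.add ((g0_int (k := k) hqi).continuous_primitive 0)).congr
    fun x => (Qf_eq hqi x).symm

lemma Qf_deriv (hq : Continuous q) (hqi : Integrable fun t => ‖q t‖) (x : ℝ) :
    HasDerivAt (Qf q k) (g0 q k x) x := by
  have h : HasDerivAt (fun y => ∫ t in (0:ℝ)..y, g0 q k t) (g0 q k x) x := by
    refine intervalIntegral.integral_hasDerivAt_right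
      ((g0_int (k := k) hqi).intervalIntegrable) ?_ (g0_cont hq).continuousAt
    exact (g0_cont hq).stronglyMeasurable.stronglyMeasurableAtFilter
  have heq : Qf q k = fun y => Qf q k 0 + ∫ t in (0:ℝ)..y, g0 q k t := funext (Qf_eq hqi)
  rw [heq]
  exact h.const_add _

lemma Qf_nonneg (x : ℝ) : 0 ≤ Qf q k x :=
  setIntegral_nonneg measurableSet_Iic fun t _ => g0_nonneg t

lemma Qf_mono (hqi : Integrable fun t => ‖q t‖) {s t : ℝ} (h : s ≤ t) :
    Qf q k s ≤ Qf q k t :=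
  setIntegral_mono_set (g0_int (k := k) hqi).integrableOn (.of_forall g0_nonneg)
    (HasSubset.Subset.eventuallyLE (Set.Iic_subset_Iic.2 h))

lemma Qf_le_Qtot (hqi : Integrable fun t => ‖q t‖) (x : ℝ) :
    Qf q k x ≤ ∫ t, g0 q k t :=
  setIntegral_le_integral (g0_int (k := k) hqi) (.of_forall g0_nonneg)

lemma Qtot_nonneg : 0 ≤ ∫ t, g0 q k t := integral_nonneg g0_nonneg

lemma Qf_tendsto (hqi : Integrable fun t => ‖q t‖) :
    Tendsto (Qf q k) atBot (𝓝 0) := by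
  have h := intervalIntegral_tendsto_integral_Iic (μ := volume) 0
    ((g0_int (k := k) hqi).integrableOn (s := Set.Iic 0)) (tendsto_id (α := ℝ) (x := atBot))
  have h2 : Tendsto (fun a : ℝ => Qf q k 0 - ∫ t in a..(0:ℝ), g0 q k t) atBot
      (𝓝 (Qf q k 0 - Qf q k 0)) := tendsto_const_nhds.sub h
  rw [sub_self] at h2
  refine h2.congr fun a => ?_
  have := Qf_eq (k := k) hqi a
  rw [intervalIntegral.integral_symm]
  simp only [Qf] at *
  linarith

lemma g0Qn_int (hq : Continuous q) (hqi : Integrable fun t => ‖q t‖) (n : ℕ) (x : ℝ) :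
    IntegrableOn (fun t => g0 q k t * Qf q k t ^ n) (Set.Iic x) := by
  refine Integrable.mono' (((g0_int (k := k) hqi).integrableOn).mul_const (Qf q k x ^ n))
    (((g0_cont hq).mul ((Qf_cont hqi).pow n)).aestronglyMeasurable) ?_
  refine (ae_restrict_iff' measurableSet_Iic).2 (.of_forall fun t ht => ?_)
  rw [Real.norm_eq_abs, abs_of_nonneg (mul_nonneg (g0_nonneg t) (pow_nonneg (Qf_nonneg t) n))]
  exact mul_le_mul_of_nonneg_left (pow_le_pow_left₀ (Qf_nonneg t) (Qf_mono hqi ht) n)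
    (g0_nonneg t)

lemma key (hq : Continuous q) (hqi : Integrable fun t => ‖q t‖) (n : ℕ) (x : ℝ) :
    ∫ t in Set.Iic x, g0 q k t * Qf q k t ^ n = Qf q k x ^ (n + 1) / (n + 1) := by
  have hderiv : ∀ y : ℝ, HasDerivAt (fun y => Qf q k y ^ (n + 1) / ((n : ℝ) + 1))
      (g0 q k y * Qf q k y ^ n) y := by
    intro y
    have h := ((Qf_deriv (k := k) hq hqi y).pow (n + 1)).div_const ((n : ℝ) + 1)
    have : ((n : ℝ) + 1) ≠ 0 := by positivity
    have e : (((n + 1 : ℕ) : ℝ) * Qf q k y ^ (n + 1 - 1) * g0 q k y / ((n : ℝ) + 1))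
        = g0 q k y * Qf q k y ^ n := by
      rw [div_eq_iff this]; simp only [Nat.add_sub_cancel, Nat.cast_add, Nat.cast_one]
      ring
    rw [e] at h
    exact h
  have htend : Tendsto (fun y => Qf q k y ^ (n + 1) / ((n : ℝ) + 1)) atBot (𝓝 0) := by
    have h := ((Qf_tendsto (k := k) hqi).pow (n + 1)).div_const ((n : ℝ) + 1)
    simpa using h
  have h := integral_Iic_of_hasDerivAt_of_tendsto
    (f := fun y => Qf q k y ^ (n + 1) / ((n : ℝ) + 1))
    (f' := fun t => g0 q k t * Qf q k t ^ n) (a := x)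
    (hderiv x).continuousAt.continuousWithinAt (fun y _ => hderiv y)
    (g0Qn_int hq hqi n x) htend
  rw [h]
  push_cast
  ring


noncomputable def Tmap (q : ℝ → ℂ) (k : ℝ) (f : ℝ → ℂ) : ℝ → ℂ := fun x =>
  Complex.exp (-(Complex.I * k * x)) +
    ∫ t in Set.Iic x, ((Real.sin (k * (x - t)) / k : ℝ) : ℂ) * q t * f t

lemma kernel_norm_le (x t : ℝ) : ‖((Real.sin (k * (x - t)) / k : ℝ) : ℂ)‖ ≤ 1 / |k| := by
  rw [Complex.norm_real, Real.norm_eq_abs, abs_div]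
  rw [div_eq_mul_inv, div_eq_mul_inv]
  exact mul_le_mul_of_nonneg_right (Real.abs_sin_le_one _) (inv_nonneg.2 (abs_nonneg _))

lemma integrand_int (hq : Continuous q) (hqi : Integrable fun t => ‖q t‖) {f : ℝ → ℂ}
    (hf : Continuous f) {M : ℝ} (hM : ∀ t, ‖f t‖ ≤ M) (x : ℝ) :
    Integrable (fun t => ((Real.sin (k * (x - t)) / k : ℝ) : ℂ) * q t * f t) := by
  refine Integrable.mono' (hqi.mul_const (M / |k|)) ?_ (.of_forall fun t => ?_)
  · apply Continuous.aestronglyMeasurable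
    fun_prop
  · rw [norm_mul, norm_mul]
    have h1 := kernel_norm_le (k := k) x t
    have h2 : ‖f t‖ ≤ M := hM t
    have h3 : (0:ℝ) ≤ ‖q t‖ := norm_nonneg _
    have h4 : (0:ℝ) ≤ ‖f t‖ := norm_nonneg _
    have h5 : (0:ℝ) ≤ 1/|k| := by positivity
    calc ‖((Real.sin (k * (x - t)) / k : ℝ) : ℂ)‖ * ‖q t‖ * ‖f t‖
        ≤ (1/|k|) * ‖q t‖ * M := by
          apply mul_le_mul (mul_le_mul_of_nonneg_right h1 h3) h2 h4 (by positivity)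
      _ = ‖q t‖ * (M / |k|) := by ring

lemma integrand_norm_le (hq : Continuous q) {f : ℝ → ℂ} {M : ℝ} (hM : ∀ t, ‖f t‖ ≤ M)
    (hM0 : 0 ≤ M) (x t : ℝ) :
    ‖((Real.sin (k * (x - t)) / k : ℝ) : ℂ) * q t * f t‖ ≤ g0 q k t * M := by
  rw [norm_mul, norm_mul]
  have h1 := kernel_norm_le (k := k) x t
  calc ‖((Real.sin (k * (x - t)) / k : ℝ) : ℂ)‖ * ‖q t‖ * ‖f t‖
      ≤ (1/|k|) * ‖q t‖ * M :=
        mul_le_mul (mul_le_mul_of_nonneg_right h1 (norm_nonneg _)) (hM t) (norm_nonneg _)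
          (by positivity)
    _ = g0 q k t * M := by rw [g0]; ring

lemma Tmap_cont (hq : Continuous q) (hqi : Integrable fun t => ‖q t‖) {f : ℝ → ℂ}
    (hf : Continuous f) {M : ℝ} (hM : ∀ t, ‖f t‖ ≤ M) :
    Continuous (Tmap q k f) := by
  have hM0 : 0 ≤ M := le_trans (norm_nonneg _) (hM 0)
  have hint1 : Integrable (fun t => ((Real.cos (k * t) : ℝ) : ℂ) * (q t * f t)) := by
    refine Integrable.mono' (hqi.mul_const M) ?_ (.of_forall fun t => ?_)
    · apply Continuous.aestronglyMeasurable; fun_prop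
    · rw [norm_mul, norm_mul, Complex.norm_real, Real.norm_eq_abs]
      calc |Real.cos (k * t)| * (‖q t‖ * ‖f t‖) ≤ 1 * (‖q t‖ * M) := by
            exact mul_le_mul (Real.abs_cos_le_one _)
              (mul_le_mul_of_nonneg_left (hM t) (norm_nonneg _)) (by positivity) one_pos.le
        _ = ‖q t‖ * M := one_mul _
  have hint2 : Integrable (fun t => ((Real.sin (k * t) : ℝ) : ℂ) * (q t * f t)) := by
    refine Integrable.mono' (hqi.mul_const M) ?_ (.of_forall fun t => ?_)
    · apply Continuous.aestronglyMeasurable; fun_prop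
    · rw [norm_mul, norm_mul, Complex.norm_real, Real.norm_eq_abs]
      calc |Real.sin (k * t)| * (‖q t‖ * ‖f t‖) ≤ 1 * (‖q t‖ * M) := by
            exact mul_le_mul (Real.abs_sin_le_one _)
              (mul_le_mul_of_nonneg_left (hM t) (norm_nonneg _)) (by positivity) one_pos.le
        _ = ‖q t‖ * M := one_mul _
  have hrw : ∀ x : ℝ, (∫ t in Set.Iic x, ((Real.sin (k * (x - t)) / k : ℝ) : ℂ) * q t * f t)
      = ((Real.sin (k * x) / k : ℝ) : ℂ) *
          (∫ t in Set.Iic x, ((Real.cos (k * t) : ℝ) : ℂ) * (q t * f t))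
        - ((Real.cos (k * x) / k : ℝ) : ℂ) *
          (∫ t in Set.Iic x, ((Real.sin (k * t) : ℝ) : ℂ) * (q t * f t)) := by
    intro x
    rw [← integral_const_mul, ← integral_const_mul,
      ← integral_sub ((hint1.integrableOn).const_mul _) ((hint2.integrableOn).const_mul _)]
    refine integral_congr_ae (.of_forall fun t => ?_)
    simp only
    rw [show k * (x - t) = k * x - k * t by ring, Real.sin_sub]
    push_cast
    ring
  have hc1 : Continuous fun x => ∫ t in Set.Iic x, ((Real.cos (k * t) : ℝ) : ℂ) * (q t * f t) := by
    have e : ∀ x : ℝ, (∫ t in Set.Iic x, ((Real.cos (k * t) : ℝ) : ℂ) * (q t * f t))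
        = (∫ t in Set.Iic (0:ℝ), ((Real.cos (k * t) : ℝ) : ℂ) * (q t * f t))
          + ∫ s in (0:ℝ)..x, ((Real.cos (k * s) : ℝ) : ℂ) * (q s * f s) := by
      intro x
      have := intervalIntegral.integral_Iic_sub_Iic (hint1.integrableOn (s := Set.Iic 0))
        (hint1.integrableOn (s := Set.Iic x))
      rw [← this]; ring
    have hcont : Continuous fun x : ℝ =>
        (∫ t in Set.Iic (0:ℝ), ((Real.cos (k * t) : ℝ) : ℂ) * (q t * f t))
          + ∫ s in (0:ℝ)..x, ((Real.cos (k * s) : ℝ) : ℂ) * (q s * f s) :=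
      continuous_const.add (hint1.continuous_primitive 0)
    exact hcont.congr fun x => (e x).symm
  have hc2 : Continuous fun x => ∫ t in Set.Iic x, ((Real.sin (k * t) : ℝ) : ℂ) * (q t * f t) := by
    have e : ∀ x : ℝ, (∫ t in Set.Iic x, ((Real.sin (k * t) : ℝ) : ℂ) * (q t * f t))
        = (∫ t in Set.Iic (0:ℝ), ((Real.sin (k * t) : ℝ) : ℂ) * (q t * f t))
          + ∫ s in (0:ℝ)..x, ((Real.sin (k * s) : ℝ) : ℂ) * (q s * f s) := by
      intro x
      have := intervalIntegral.integral_Iic_sub_Iic (hint2.integrableOn (s := Set.Iic 0))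
        (hint2.integrableOn (s := Set.Iic x))
      rw [← this]; ring
    have hcont : Continuous fun x : ℝ =>
        (∫ t in Set.Iic (0:ℝ), ((Real.sin (k * t) : ℝ) : ℂ) * (q t * f t))
          + ∫ s in (0:ℝ)..x, ((Real.sin (k * s) : ℝ) : ℂ) * (q s * f s) :=
      continuous_const.add (hint2.continuous_primitive 0)
    exact hcont.congr fun x => (e x).symm
  have hcoef1 : Continuous fun x : ℝ => ((Real.sin (k * x) / k : ℝ) : ℂ) := by fun_prop
  have hcoef2 : Continuous fun x : ℝ => ((Real.cos (k * x) / k : ℝ) : ℂ) := by fun_prop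
  have hexp : Continuous fun x : ℝ => Complex.exp (-(Complex.I * k * x)) := by fun_prop
  refine (hexp.add ((hcoef1.mul hc1).sub (hcoef2.mul hc2))).congr fun x => ?_
  rw [Tmap, hrw x]
  rfl

lemma Tmap_bound (hq : Continuous q) (hqi : Integrable fun t => ‖q t‖) {f : ℝ → ℂ}
    (hf : Continuous f) {M : ℝ} (hM : ∀ t, ‖f t‖ ≤ M) (x : ℝ) :
    ‖Tmap q k f x‖ ≤ 1 + (∫ t, g0 q k t) * M := by
  have hM0 : 0 ≤ M := le_trans (norm_nonneg _) (hM 0)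
  refine (norm_add_le _ _).trans ?_
  have he : ‖Complex.exp (-(Complex.I * k * x))‖ = 1 := by
    rw [Complex.norm_exp]
    simp
  rw [he]
  gcongr
  calc ‖∫ t in Set.Iic x, ((Real.sin (k * (x - t)) / k : ℝ) : ℂ) * q t * f t‖
      ≤ ∫ t in Set.Iic x, ‖((Real.sin (k * (x - t)) / k : ℝ) : ℂ) * q t * f t‖ :=
        norm_integral_le_integral_norm _
    _ ≤ ∫ t in Set.Iic x, g0 q k t * M := by
        refine integral_mono ((integrand_int hq hqi hf hM x).norm.integrableOn)
          (((g0_int (k := k) hqi).mul_const M).integrableOn)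
          fun t => integrand_norm_le hq hM hM0 x t
    _ ≤ ∫ t, g0 q k t * M :=
        setIntegral_le_integral ((g0_int (k := k) hqi).mul_const M)
          (.of_forall fun t => mul_nonneg (g0_nonneg t) hM0)
    _ = (∫ t, g0 q k t) * M := integral_mul_const _ _


noncomputable def TB (q : ℝ → ℂ) (k : ℝ) (hq : Continuous q)
    (hqi : Integrable fun t => ‖q t‖) (f : ℝ →ᵇ ℂ) : ℝ →ᵇ ℂ :=
  BoundedContinuousFunction.ofNormedAddCommGroup (Tmap q k f)
    (Tmap_cont hq hqi f.continuous f.norm_coe_le_norm)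
    (1 + (∫ t, g0 q k t) * ‖f‖)
    (Tmap_bound hq hqi f.continuous f.norm_coe_le_norm)

lemma iterate_est (hq : Continuous q) (hqi : Integrable fun t => ‖q t‖)
    (n : ℕ) (f g : ℝ →ᵇ ℂ) :
    ∀ x : ℝ, ‖(TB q k hq hqi)^[n] f x - (TB q k hq hqi)^[n] g x‖
      ≤ dist f g * Qf q k x ^ n / n.factorial := by
  induction n with
  | zero =>
    intro x
    simp only [Function.iterate_zero_apply, pow_zero, mul_one, Nat.factorial_zero,
      Nat.cast_one, div_one]
    rw [← dist_eq_norm]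
    exact BoundedContinuousFunction.dist_coe_le_dist x
  | succ n ih =>
    intro x
    rw [Function.iterate_succ_apply', Function.iterate_succ_apply']
    set F := (TB q k hq hqi)^[n] f with hF
    set G := (TB q k hq hqi)^[n] g with hG
    have hFi := (integrand_int (k := k) hq hqi F.continuous F.norm_coe_le_norm x).integrableOn
      (s := Set.Iic x)
    have hGi := (integrand_int (k := k) hq hqi G.continuous G.norm_coe_le_norm x).integrableOn
      (s := Set.Iic x)
    have hsub : TB q k hq hqi F x - TB q k hq hqi G x
        = ∫ t in Set.Iic x, (((Real.sin (k * (x - t)) / k : ℝ) : ℂ) * q t * F t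
            - ((Real.sin (k * (x - t)) / k : ℝ) : ℂ) * q t * G t) := by
      show Tmap q k F x - Tmap q k G x = _
      rw [integral_sub hFi hGi]
      simp only [Tmap]
      ring
    rw [hsub]
    have hfac : ((n.factorial : ℝ)) ≠ 0 := Nat.cast_ne_zero.2 n.factorial_ne_zero
    have hptw : ∀ t : ℝ, ‖((Real.sin (k * (x - t)) / k : ℝ) : ℂ) * q t * F t
        - ((Real.sin (k * (x - t)) / k : ℝ) : ℂ) * q t * G t‖
        ≤ g0 q k t * (dist f g * Qf q k t ^ n / n.factorial) := by
      intro t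
      have hre : ((Real.sin (k * (x - t)) / k : ℝ) : ℂ) * q t * F t
          - ((Real.sin (k * (x - t)) / k : ℝ) : ℂ) * q t * G t
          = ((Real.sin (k * (x - t)) / k : ℝ) : ℂ) * q t * (F t - G t) := by ring
      rw [hre, norm_mul, norm_mul]
      have h1 := kernel_norm_le (k := k) x t
      have h2 := ih t
      have h3 : (0:ℝ) ≤ dist f g * Qf q k t ^ n / n.factorial := by
        have := dist_nonneg (x := f) (y := g)
        have := Qf_nonneg (q := q) (k := k) t
        positivity
      calc ‖((Real.sin (k * (x - t)) / k : ℝ) : ℂ)‖ * ‖q t‖ * ‖F t - G t‖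
          ≤ (1 / |k|) * ‖q t‖ * (dist f g * Qf q k t ^ n / n.factorial) :=
            mul_le_mul (mul_le_mul_of_nonneg_right h1 (norm_nonneg _)) h2 (norm_nonneg _)
              (by positivity)
        _ = g0 q k t * (dist f g * Qf q k t ^ n / n.factorial) := by
            simp only [g0]; ring
    have hint2 : IntegrableOn
        (fun t => g0 q k t * (dist f g * Qf q k t ^ n / n.factorial)) (Set.Iic x) := by
      refine ((g0Qn_int hq hqi n x).const_mul (dist f g / n.factorial)).congr
        (.of_forall fun t => by ring)
    calc ‖∫ t in Set.Iic x, (((Real.sin (k * (x - t)) / k : ℝ) : ℂ) * q t * F t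
            - ((Real.sin (k * (x - t)) / k : ℝ) : ℂ) * q t * G t)‖
        ≤ ∫ t in Set.Iic x, ‖((Real.sin (k * (x - t)) / k : ℝ) : ℂ) * q t * F t
            - ((Real.sin (k * (x - t)) / k : ℝ) : ℂ) * q t * G t‖ :=
          norm_integral_le_integral_norm _
      _ ≤ ∫ t in Set.Iic x, g0 q k t * (dist f g * Qf q k t ^ n / n.factorial) :=
          integral_mono ((hFi.sub hGi).norm) hint2 hptw
      _ = (dist f g / n.factorial) * ∫ t in Set.Iic x, g0 q k t * Qf q k t ^ n := by
          rw [← integral_const_mul]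
          exact integral_congr_ae (.of_forall fun t => by ring)
      _ = dist f g * Qf q k x ^ (n + 1) / (n + 1).factorial := by
          rw [key hq hqi n x, Nat.factorial_succ]
          push_cast
          rw [div_mul_div_comm]
          ring

lemma lipschitz_iterate (hq : Continuous q) (hqi : Integrable fun t => ‖q t‖) (n : ℕ) :
    LipschitzWith (Real.toNNReal ((∫ t, g0 q k t) ^ n / n.factorial))
      ((TB q k hq hqi)^[n]) := by
  refine LipschitzWith.of_dist_le_mul fun f g => ?_
  have h0 : (0:ℝ) ≤ (∫ t, g0 q k t) ^ n / (n.factorial : ℝ) :=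
    div_nonneg (pow_nonneg Qtot_nonneg n) (Nat.cast_nonneg _)
  rw [Real.coe_toNNReal _ h0]
  refine (BoundedContinuousFunction.dist_le (mul_nonneg h0 dist_nonneg)).2 fun x => ?_
  rw [dist_eq_norm]
  refine (iterate_est hq hqi n f g x).trans ?_
  have h1 : Qf q k x ^ n ≤ (∫ t, g0 q k t) ^ n :=
    pow_le_pow_left₀ (Qf_nonneg x) (Qf_le_Qtot hqi x) n
  calc dist f g * Qf q k x ^ n / n.factorial
      ≤ dist f g * (∫ t, g0 q k t) ^ n / n.factorial := by gcongr
    _ = (∫ t, g0 q k t) ^ n / n.factorial * dist f g := by ring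

end JostAux

open JostAux BoundedContinuousFunction in
/-- Existence and uniqueness of the left Jost solution `f₋(k,·)`: for a Faddeev-class
potential `q` and nonzero real `k`, there is a unique bounded continuous `f : ℝ → ℂ` with
`f x = e^{−ikx} + ∫_{−∞}^x (sin(k(x−t))/k) q(t) f(t) dt`. -/
theorem left_jost_solution_exists_unique (q : ℝ → ℂ) (hq : Continuous q)
    (hq' : Integrable (fun x => (1 + |x|) * ‖q x‖)) (k : ℝ) (hk : k ≠ 0) :
    ∃! f : ℝ → ℂ, Continuous f ∧ (∃ C : ℝ, ∀ x, ‖f x‖ ≤ C) ∧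
      ∀ x : ℝ, f x = Complex.exp (-(Complex.I * k * x)) +
        ∫ t in Set.Iic x, ((Real.sin (k * (x - t)) / k : ℝ) : ℂ) * q t * f t := by
  classical
  have hqi : Integrable fun t => ‖q t‖ := by
    refine hq'.mono' hq.norm.aestronglyMeasurable (.of_forall fun x => ?_)
    rw [norm_norm]
    exact le_mul_of_one_le_left (norm_nonneg _) (by linarith [abs_nonneg x])
  obtain ⟨n, hn⟩ : ∃ n : ℕ, (∫ t, g0 q k t) ^ n / n.factorial < 1 :=
    ((FloorSemiring.tendsto_pow_div_factorial_atTop (K := ℝ)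
      (∫ t, g0 q k t)).eventually (gt_mem_nhds one_pos)).exists
  have hC : ContractingWith (Real.toNNReal ((∫ t, g0 q k t) ^ n / n.factorial))
      ((TB q k hq hqi)^[n]) :=
    ⟨by exact_mod_cast Real.toNNReal_lt_one.2 hn, lipschitz_iterate hq hqi n⟩
  have hne : Nonempty (ℝ →ᵇ ℂ) := ⟨0⟩
  set y := hC.fixedPoint ((TB q k hq hqi)^[n]) with hy
  have hfix : Function.IsFixedPt (TB q k hq hqi) y :=
    ContractingWith.isFixedPt_fixedPoint_iterate hC
  refine ⟨⇑y, ⟨y.continuous, ⟨‖y‖, fun x => y.norm_coe_le_norm x⟩, fun x => ?_⟩, ?_⟩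
  · exact (congrArg (fun F : ℝ →ᵇ ℂ => F x) hfix).symm
  · rintro g ⟨hgc, ⟨C, hgC⟩, hgeq⟩
    set gB := BoundedContinuousFunction.ofNormedAddCommGroup g hgc C hgC with hgB
    have hgfix : Function.IsFixedPt (TB q k hq hqi) gB := by
      apply BoundedContinuousFunction.ext
      intro x
      exact (hgeq x).symm
    have hgy : gB = y := hC.fixedPoint_unique (hgfix.iterate n)
    funext x
    calc g x = gB x := rfl
      _ = y x := by rw [hgy]
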